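/- (Kronecker-product tensor inequality underlying the local synchronization theorem.) Let f : ℝⁿ → ℝⁿ be C¹ with Jacobian Jf, P : ℝⁿ → ℝ^{n×n} a C¹ map with symmetric values, U : ℝⁿ → ℝ a C¹ function, α : ℝⁿ → ℝ^p continuous, and suppose ∇U(x)ᵀ = P(x) g(x) α(x) for all x, where g : ℝⁿ → ℝ^{n×p} is continuous. Let Q ∈ ℝ^{n×n} be symmetric positive definite and ρ > 0 be such that DP(x)[f(x)] + P(x)Jf(x) + Jf(x)ᵀP(x) − ρ·∇U(x)ᵀ∇U(x) ≤ −Q for all x ∈ ℝⁿ. Let S ∈ ℝ^{(N−1)×(N−1)} be symmetric positive definite and A ∈ ℝ^{(N−1)×(N−1)} satisfy S A + Aᵀ S ≤ −ν S for some ν > 0, and let ℓ ≥ ρ/ν. Then, setting B(x) = I_{N−1} ⊗ Jf(x) + ℓ·A ⊗ (g(x)α(x)∇U(x)), one has for all x ∈ ℝⁿ: S ⊗ (DP(x)[f(x)]) + (S ⊗ P(x))·B(x) + B(x)ᵀ·(S ⊗ P(x)) ≤ −(S ⊗ Q). -/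

import Mathlib

open Matrix
open scoped Kronecker

lemma psd_smul' {m : Type*} [Fintype m] {M : Matrix m m ℝ} (h : M.PosSemidef) {c : ℝ}
    (hc : 0 ≤ c) : (c • M).PosSemidef := by
  refine .of_dotProduct_mulVec_nonneg (by rw [Matrix.IsHermitian, conjTranspose_smul, h.1.eq]; simp) fun x => ?_
  rw [smul_mulVec, dotProduct_smul]
  exact mul_nonneg hc (h.dotProduct_mulVec_nonneg x)

lemma psd_vecMulVec {m : Type*} [Fintype m] (v : m → ℝ) : (vecMulVec v v).PosSemidef := by
  apply Matrix.PosSemidef.of_dotProduct_mulVec_nonneg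
  · ext i j; simp [vecMulVec_apply, mul_comm]
  · intro x
    have hmv : (vecMulVec v v) *ᵥ x = (v ⬝ᵥ x) • v := by
      ext i
      simp [Matrix.mulVec, vecMulVec_apply, dotProduct, Finset.mul_sum, Finset.sum_mul]
      congr 1; ext j; ring
    rw [hmv, dotProduct_smul]
    have h2 : star x ⬝ᵥ v = v ⬝ᵥ x := by simp [dotProduct, mul_comm]
    rw [smul_eq_mul, h2]
    exact mul_self_nonneg _

lemma psd_kron {m n : Type*} [Fintype m] [Fintype n] [DecidableEq m] [DecidableEq n]
    {M : Matrix m m ℝ} {N : Matrix n n ℝ} (hM : M.PosSemidef) (hN : N.PosSemidef) :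
    (M ⊗ₖ N).PosSemidef := by
  exact hM.kronecker hN

/-- The Jacobian matrix of a map `ℝⁿ → ℝⁿ` at a point, entrywise via the Fréchet derivative. -/
noncomputable def stmt10Jac (n : ℕ) (f : (Fin n → ℝ) → Fin n → ℝ) (x : Fin n → ℝ) :
    Matrix (Fin n) (Fin n) ℝ :=
  Matrix.of fun i j => fderiv ℝ f x (Pi.single j 1) i

/-- The gradient row vector `∇U(x)` of a scalar function on `ℝⁿ`. -/
noncomputable def stmt10Grad (n : ℕ) (U : (Fin n → ℝ) → ℝ) (x : Fin n → ℝ) : Fin n → ℝ :=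
  fun j => fderiv ℝ U x (Pi.single j 1)

/-- (Kronecker-product tensor inequality for local synchronization.)
Under the CMF-type inequality `DP(x)[f(x)] + P Jf + Jfᵀ P − ρ ∇Uᵀ∇U ≤ −Q`, with
`∇Uᵀ = P g α`, `S` symmetric positive definite, `S A + Aᵀ S ≤ −ν S` and `ℓ ≥ ρ/ν`, setting
`B(x) = I ⊗ Jf(x) + ℓ A ⊗ (g(x)α(x)∇U(x))` one has
`S ⊗ DP(x)[f(x)] + (S ⊗ P(x)) B(x) + B(x)ᵀ (S ⊗ P(x)) ≤ −(S ⊗ Q)` for all `x`. -/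
theorem stmt10_kronecker_tensor_inequality (n p N1 : ℕ)
    (f : (Fin n → ℝ) → Fin n → ℝ) (hf : ContDiff ℝ 1 f)
    (P : (Fin n → ℝ) → Fin n → Fin n → ℝ) (hP : ContDiff ℝ 1 P)
    (hPsymm : ∀ x, (Matrix.of (P x)).IsSymm)
    (U : (Fin n → ℝ) → ℝ) (hU : ContDiff ℝ 1 U)
    (α : (Fin n → ℝ) → Fin p → ℝ) (hα : Continuous α)
    (g : (Fin n → ℝ) → Fin n → Fin p → ℝ) (hg : Continuous g)
    (hgrad : ∀ x, stmt10Grad n U x = (Matrix.of (P x) * Matrix.of (g x)).mulVec (α x))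
    (Q : Matrix (Fin n) (Fin n) ℝ) (hQ : Q.PosDef) (ρ : ℝ) (hρ : 0 < ρ)
    (hCMF : ∀ x,
      ((-Q) -
          (Matrix.of (fderiv ℝ P x (f x)) + Matrix.of (P x) * stmt10Jac n f x +
              (stmt10Jac n f x)ᵀ * Matrix.of (P x) -
            ρ • Matrix.vecMulVec (stmt10Grad n U x) (stmt10Grad n U x))).PosSemidef)
    (S : Matrix (Fin N1) (Fin N1) ℝ) (hS : S.PosDef)
    (A : Matrix (Fin N1) (Fin N1) ℝ) (ν : ℝ) (hν : 0 < ν)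
    (hSA : ((-ν) • S - (S * A + Aᵀ * S)).PosSemidef)
    (ℓ : ℝ) (hℓ : ρ / ν ≤ ℓ) :
    ∀ x : Fin n → ℝ,
      ((-(S ⊗ₖ Q)) -
          (S ⊗ₖ Matrix.of (fderiv ℝ P x (f x)) +
              (S ⊗ₖ Matrix.of (P x)) *
                ((1 : Matrix (Fin N1) (Fin N1) ℝ) ⊗ₖ stmt10Jac n f x +
                  ℓ • (A ⊗ₖ
                    Matrix.vecMulVec ((Matrix.of (g x)).mulVec (α x)) (stmt10Grad n U x))) +
            ((1 : Matrix (Fin N1) (Fin N1) ℝ) ⊗ₖ stmt10Jac n f x +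
                ℓ • (A ⊗ₖ
                  Matrix.vecMulVec ((Matrix.of (g x)).mulVec (α x)) (stmt10Grad n U x)))ᵀ *
              (S ⊗ₖ Matrix.of (P x)))).PosSemidef := by
  intro x
  have hℓ0 : 0 ≤ ℓ := le_trans (le_of_lt (div_pos hρ hν)) hℓ
  have hℓν : 0 ≤ ℓ * ν - ρ := by
    rw [sub_nonneg]
    calc ρ = (ρ / ν) * ν := by field_simp
    _ ≤ ℓ * ν := by exact mul_le_mul_of_nonneg_right hℓ (le_of_lt hν)
  set Jf := stmt10Jac n f x with hJfdef
  set Pm := Matrix.of (P x) with hPmdef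
  set DP := Matrix.of (fderiv ℝ P x (f x)) with hDPdef
  set v := stmt10Grad n U x with hvdef
  set w := (Matrix.of (g x)).mulVec (α x) with hwdef
  set W := Matrix.vecMulVec w v with hWdef
  have hv : Pm *ᵥ w = v := by
    rw [hvdef, hwdef, hgrad x]
    exact mulVec_mulVec _ _ _
  have hPW : Pm * W = Matrix.vecMulVec v v := by
    ext i j
    simp only [Matrix.mul_apply, hWdef, vecMulVec_apply, ← hv, Matrix.mulVec, dotProduct]
    rw [Finset.sum_mul]
    exact Finset.sum_congr rfl fun k _ => by ring
  have hWP : Wᵀ * Pm = Matrix.vecMulVec v v := by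
    have h1 : (Pm * W)ᵀ = Wᵀ * Pmᵀ := transpose_mul _ _
    rw [(hPsymm x).eq, hPW] at h1
    rw [← h1]
    ext i j; simp [vecMulVec_apply, mul_comm]
  have e1 : (S ⊗ₖ Pm) * ((1 : Matrix (Fin N1) (Fin N1) ℝ) ⊗ₖ Jf) = S ⊗ₖ (Pm * Jf) := by
    rw [← mul_kronecker_mul, mul_one]
  have e2 : (S ⊗ₖ Pm) * (A ⊗ₖ W) = (S * A) ⊗ₖ Matrix.vecMulVec v v := by
    rw [← mul_kronecker_mul, hPW]
  have e3 : ((1 : Matrix (Fin N1) (Fin N1) ℝ) ⊗ₖ Jf)ᵀ * (S ⊗ₖ Pm) = S ⊗ₖ (Jfᵀ * Pm) := by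
    rw [← kroneckerMap_transpose, transpose_one, ← mul_kronecker_mul, one_mul]
  have e4 : (A ⊗ₖ W)ᵀ * (S ⊗ₖ Pm) = (Aᵀ * S) ⊗ₖ Matrix.vecMulVec v v := by
    rw [← kroneckerMap_transpose, ← mul_kronecker_mul, hWP]
  have expand : (S ⊗ₖ Pm) * ((1 : Matrix (Fin N1) (Fin N1) ℝ) ⊗ₖ Jf + ℓ • (A ⊗ₖ W)) =
      S ⊗ₖ (Pm * Jf) + ℓ • ((S * A) ⊗ₖ Matrix.vecMulVec v v) := by
    rw [mul_add, e1, mul_smul_comm, e2]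
  have expandT : ((1 : Matrix (Fin N1) (Fin N1) ℝ) ⊗ₖ Jf + ℓ • (A ⊗ₖ W))ᵀ * (S ⊗ₖ Pm) =
      S ⊗ₖ (Jfᵀ * Pm) + ℓ • ((Aᵀ * S) ⊗ₖ Matrix.vecMulVec v v) := by
    rw [transpose_add, transpose_smul, add_mul, e3, smul_mul_assoc, e4]
  rw [expand, expandT]
  have key : (-(S ⊗ₖ Q)) -
      (S ⊗ₖ DP + (S ⊗ₖ (Pm * Jf) + ℓ • ((S * A) ⊗ₖ Matrix.vecMulVec v v)) +
        (S ⊗ₖ (Jfᵀ * Pm) + ℓ • ((Aᵀ * S) ⊗ₖ Matrix.vecMulVec v v))) =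
      S ⊗ₖ ((-Q) - (DP + Pm * Jf + Jfᵀ * Pm - ρ • Matrix.vecMulVec v v)) +
        ℓ • (((-ν) • S - (S * A + Aᵀ * S)) ⊗ₖ Matrix.vecMulVec v v) +
        (ℓ * ν - ρ) • (S ⊗ₖ Matrix.vecMulVec v v) := by
    ext ⟨i1, i2⟩ ⟨j1, j2⟩
    simp only [Matrix.add_apply, Matrix.sub_apply, Matrix.neg_apply, Matrix.smul_apply,
      kroneckerMap_apply, vecMulVec_apply, smul_eq_mul]
    ring
  rw [key]
  exact ((psd_kron hS.posSemidef (hCMF x)).add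
    (psd_smul' (psd_kron hSA (psd_vecMulVec v)) hℓ0)).add
    (psd_smul' (psd_kron hS.posSemidef (psd_vecMulVec v)) hℓν)
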